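/- Let z be the operator on ℓ²(ℤ) (or on ⊕_{n∈ℤ} K) defined on finitely supported vectors by z h_n = q^{-n} (A h)_{n+1}, where A is a bounded self-adjoint operator on K commuting with the grading. Then z z* = q² z* z on finitely supported vectors. -/

import Mathlib

/-- On finitely supported vectors of ⊕_{n∈ℤ} K (here `ℤ →₀ K`),
with A a bounded self-adjoint operator on K, the operator
`z h_n = q^{-n} (A h)_{n+1}` with formal adjoint `zs h_n = q^{-(n-1)} (A h)_{n-1}`
satisfies `z z* = q² z* z`. -/
theorem stmt5 {K : Type*} [NormedAddCommGroup K] [InnerProductSpace ℂ K] [CompleteSpace K]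
    (q : ℝ) (hq0 : 0 < q) (hq1 : q < 1)
    (A : K →L[ℂ] K) (hA : IsSelfAdjoint A)
    (z zs : (ℤ →₀ K) →ₗ[ℂ] (ℤ →₀ K))
    (hz : ∀ (n : ℤ) (h : K),
      z (Finsupp.single n h) = ((q ^ (-n) : ℝ) : ℂ) • Finsupp.single (n + 1) (A h))
    (hzs : ∀ (n : ℤ) (h : K),
      zs (Finsupp.single n h) = ((q ^ (-(n - 1)) : ℝ) : ℂ) • Finsupp.single (n - 1) (A h)) :
    ∀ x : ℤ →₀ K, z (zs x) = ((q : ℂ) ^ 2) • zs (z x) := by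
  have key : ∀ (n : ℤ) (h : K),
      z (zs (Finsupp.single n h)) = ((q : ℂ) ^ 2) • zs (z (Finsupp.single n h)) := by
    intro n h
    rw [hzs, map_smul, hz, hz, map_smul, hzs]
    simp only [smul_smul, add_sub_cancel_right, sub_add_cancel]
    congr 1
    have hqne : (q : ℂ) ≠ 0 := by exact_mod_cast hq0.ne'
    simp only [Complex.ofReal_zpow]
    rw [← zpow_add₀ hqne, ← zpow_add₀ hqne, ← zpow_natCast (q : ℂ) 2, ← zpow_add₀ hqne]
    ring_nf
  intro x
  induction x using Finsupp.induction with
  | zero => simp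
  | single_add n h x _ _ ih =>
    rw [map_add, map_add, key, ih, map_add, map_add, smul_add]
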